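/- Let σ, ω be Radon measures on ℝ and let (T, T*) be a formal operator pair that is essentially well localized with parameter r ≥ 0. Then for all Q, I ∈ 𝒟 with |I| ≤ 2|Q| and I ⊄ Q^{(r+1)}: ⟨T(σ·1_Q), h_I^ω⟩_ω = 0 and ⟨T*(ω·1_Q), h_I^σ⟩_σ = 0. -/

import Mathlib

open MeasureTheory Set Filter
open scoped Classical

noncomputable section

/-- The dyadic interval `[2^k m, 2^k (m+1))`. -/
def dy (k m : ℤ) : Set ℝ := Set.Ico ((2:ℝ)^k * m) ((2:ℝ)^k * (m+1))

/-- The left half of the dyadic interval. -/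
def dyL (k m : ℤ) : Set ℝ := dy (k-1) (2*m)

/-- The right half of the dyadic interval. -/
def dyR (k m : ℤ) : Set ℝ := dy (k-1) (2*m+1)

/-- `I^{(r)}`: the dyadic interval of length `2^r |I|` containing `I = dy k m`. -/
def dyUp (r : ℕ) (k m : ℤ) : Set ℝ := dy (k + r) (Int.fdiv m (2^r))

/-- The pairing `⟨f, g⟩_μ = ∫ f g dμ`. -/
def ip (μ : Measure ℝ) (f g : ℝ → ℝ) : ℝ := ∫ x, f x * g x ∂μ

/-- The `L²(μ)` norm. -/
def nrm (μ : Measure ℝ) (f : ℝ → ℝ) : ℝ := Real.sqrt (∫ x, f x ^ 2 ∂μ)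

/-- The average `⟨f⟩_s^μ = μ(s)⁻¹ ∫_s f dμ`. -/
def avg (μ : Measure ℝ) (s : Set ℝ) (f : ℝ → ℝ) : ℝ := (μ s).toReal⁻¹ * ∫ x in s, f x ∂μ

/-- The weight-adapted Haar function `h_I^σ` for `I = dy k m`. -/
def haarW (σ : Measure ℝ) (k m : ℤ) : ℝ → ℝ :=
  if σ (dyL k m) ≠ 0 ∧ σ (dyR k m) ≠ 0 then
    fun x =>
      Real.sqrt ((σ (dyL k m)).toReal / ((σ (dy k m)).toReal * (σ (dyR k m)).toReal))
          * (dyR k m).indicator 1 x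
        - Real.sqrt ((σ (dyR k m)).toReal / ((σ (dy k m)).toReal * (σ (dyL k m)).toReal))
          * (dyL k m).indicator 1 x
  else 0

/-- The martingale difference `Δ_I^σ f = ⟨f, h_I^σ⟩_σ · h_I^σ`. -/
def mdiff (σ : Measure ℝ) (k m : ℤ) (f : ℝ → ℝ) : ℝ → ℝ :=
  fun x => ip σ f (haarW σ k m) * haarW σ k m x

/-- `𝒮`: the linear span of the indicators of dyadic intervals. -/
def simpleSpan : Submodule ℝ (ℝ → ℝ) :=
  Submodule.span ℝ {f : ℝ → ℝ | ∃ k m : ℤ, f = (dy k m).indicator 1}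

/-- A formal operator pair `(T, T*)`: linear maps with `T` sending `𝒮_σ` into `L²(ω)`,
`T*` sending `𝒮_ω` into `L²(σ)`, satisfying the duality relation
`⟨T(σf), g⟩_ω = ⟨f, T*(ωg)⟩_σ` on the spans of indicators.  We write `P.T f` for `T(σf)`
and `P.Ts g` for `T*(ωg)`. -/
structure FormalPair (σ ω : Measure ℝ) where
  T : (ℝ → ℝ) →ₗ[ℝ] (ℝ → ℝ)
  Ts : (ℝ → ℝ) →ₗ[ℝ] (ℝ → ℝ)
  memT : ∀ f ∈ simpleSpan, MemLp (T f) 2 ω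
  memTs : ∀ g ∈ simpleSpan, MemLp (Ts g) 2 σ
  adj : ∀ f ∈ simpleSpan, ∀ g ∈ simpleSpan, ∫ x, T f x * g x ∂ω = ∫ x, f x * Ts g x ∂σ

/-- `(T, T*)` is essentially well localized with parameter `r`. -/
def EWL {σ ω : Measure ℝ} (P : FormalPair σ ω) (r : ℕ) : Prop :=
  ∀ k m : ℤ,
    (∀ᵐ x ∂ω, x ∉ dyUp r k m → P.T (haarW σ k m) x = 0) ∧
    (∀ᵐ x ∂σ, x ∉ dyUp r k m → P.Ts (haarW ω k m) x = 0)


/-! ### Auxiliary lemmas -/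

lemma mem_dy_iff {k m : ℤ} {x : ℝ} : x ∈ dy k m ↔ ⌊x / (2:ℝ)^k⌋ = m := by
  have h : (0:ℝ) < (2:ℝ)^k := by positivity
  rw [dy, Set.mem_Ico, Int.floor_eq_iff]
  constructor
  · rintro ⟨h1, h2⟩
    refine ⟨by rw [le_div_iff₀ h]; linarith [mul_comm ((2:ℝ)^k) (m:ℝ)], ?_⟩
    rw [div_lt_iff₀ h]
    push_cast at h2 ⊢
    linarith [mul_comm ((2:ℝ)^k) ((m:ℝ)+1)]
  · rintro ⟨h1, h2⟩
    rw [le_div_iff₀ h] at h1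
    rw [div_lt_iff₀ h] at h2
    push_cast at h1 h2 ⊢
    constructor <;> nlinarith

lemma floor_div_nat' (x : ℝ) (n : ℕ) (hn : 0 < n) :
    ⌊x / (n:ℝ)⌋ = Int.fdiv ⌊x⌋ n := by
  have hn' : (0:ℝ) < (n:ℝ) := by exact_mod_cast hn
  rw [Int.fdiv_eq_ediv_of_nonneg _ (by exact_mod_cast hn.le)]
  set q := ⌊x⌋ / (n:ℤ) with hq
  have hq1 : q * n ≤ ⌊x⌋ := Int.ediv_mul_le ⌊x⌋ (by exact_mod_cast hn.ne')
  have hq2 : ⌊x⌋ < (q+1) * n := Int.lt_ediv_add_one_mul_self ⌊x⌋ (by exact_mod_cast hn)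
  rw [Int.floor_eq_iff]
  constructor
  · rw [le_div_iff₀ hn']
    have : ((q * n : ℤ) : ℝ) ≤ (⌊x⌋ : ℝ) := by exact_mod_cast hq1
    push_cast at this
    linarith [Int.floor_le x]
  · rw [div_lt_iff₀ hn']
    have h2 : (⌊x⌋ : ℝ) + 1 ≤ ((q+1) * n : ℤ) := by
      have := Int.add_one_le_iff.mpr hq2
      exact_mod_cast this
    push_cast at h2
    linarith [Int.lt_floor_add_one x]

lemma floor_zpow_div {k k' : ℤ} (h : k ≤ k') (x : ℝ) :
    ⌊x / (2:ℝ)^k'⌋ = Int.fdiv ⌊x / (2:ℝ)^k⌋ (2^((k'-k).toNat)) := by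
  have hd : k' = k + ((k'-k).toNat : ℤ) := by
    rw [Int.toNat_of_nonneg (by linarith)]; ring
  set d := (k'-k).toNat
  have h2 : (2:ℝ)^k' = (2:ℝ)^k * ((2^d : ℕ) : ℝ) := by
    rw [hd, zpow_add₀ (by norm_num : (2:ℝ) ≠ 0)]
    push_cast
    rw [zpow_natCast]
  have h3 : x / (2:ℝ)^k' = (x / (2:ℝ)^k) / ((2^d : ℕ) : ℝ) := by
    rw [h2]; ring
  rw [h3, floor_div_nat' _ _ (by positivity)]
  push_cast
  rfl

lemma dy_subset_of_level_le {k k' m m' : ℤ} (h : k ≤ k') {x : ℝ}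
    (hx : x ∈ dy k m) (hx' : x ∈ dy k' m') : dy k m ⊆ dy k' m' := by
  intro y hy
  rw [mem_dy_iff] at hx hx' hy ⊢
  rw [floor_zpow_div h, hy, ← hx, ← floor_zpow_div h, hx']

lemma dy_subset_dyUp (r : ℕ) (k m : ℤ) : dy k m ⊆ dyUp r k m := by
  intro x hx
  rw [mem_dy_iff] at hx
  rw [dyUp, mem_dy_iff]
  have h : k ≤ k + (r:ℤ) := by linarith [Int.ofNat_nonneg r]
  rw [floor_zpow_div h, hx]
  congr 1
  have : (k + (r:ℤ) - k).toNat = r := by simp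
  rw [this]

lemma dy_dyUp_disjoint {r : ℕ} {kQ mQ kI mI : ℤ} (hk : kI ≤ kQ + 1)
    (hns : ¬ dy kI mI ⊆ dyUp (r+1) kQ mQ) :
    ∀ x, x ∈ dy kQ mQ → x ∉ dyUp r kI mI := by
  intro x hxQ hxJ
  apply hns
  have h1 : dy kI mI ⊆ dyUp r kI mI := dy_subset_dyUp r kI mI
  have hxQ' : x ∈ dyUp (r+1) kQ mQ := dy_subset_dyUp (r+1) kQ mQ hxQ
  have hlev : kI + (r:ℤ) ≤ kQ + ((r+1 : ℕ) : ℤ) := by push_cast; linarith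
  exact h1.trans (dy_subset_of_level_le hlev hxJ hxQ')

lemma haarW_mem_simpleSpan (μ : Measure ℝ) (k m : ℤ) : haarW μ k m ∈ simpleSpan := by
  rw [haarW]
  split_ifs with h
  · have hR : (dyR k m).indicator (1 : ℝ → ℝ) ∈ simpleSpan :=
      Submodule.subset_span ⟨k-1, 2*m+1, rfl⟩
    have hL : (dyL k m).indicator (1 : ℝ → ℝ) ∈ simpleSpan :=
      Submodule.subset_span ⟨k-1, 2*m, rfl⟩
    exact Submodule.sub_mem _
      (Submodule.smul_mem _ _ hR) (Submodule.smul_mem _ _ hL)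
  · exact Submodule.zero_mem _

/-- If `(T, T*)` is essentially well localized with parameter `r`, then for all dyadic
`Q = dy kQ mQ` and `I = dy kI mI` with `|I| ≤ 2|Q|` and `I ⊄ Q^{(r+1)}`, the Haar
coefficients `⟨T(σ 1_Q), h_I^ω⟩_ω` and `⟨T*(ω 1_Q), h_I^σ⟩_σ` vanish. -/
theorem ewl_haar_coefficients_vanish
    (σ ω : Measure ℝ) [IsLocallyFiniteMeasure σ] [IsLocallyFiniteMeasure ω]
    (P : FormalPair σ ω) (r : ℕ) (hP : EWL P r) :
    ∀ kQ mQ kI mI : ℤ, (2:ℝ)^kI ≤ 2 * (2:ℝ)^kQ → ¬ dy kI mI ⊆ dyUp (r + 1) kQ mQ →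
      ip ω (P.T ((dy kQ mQ).indicator 1)) (haarW ω kI mI) = 0 ∧
      ip σ (P.Ts ((dy kQ mQ).indicator 1)) (haarW σ kI mI) = 0 := by
  intro kQ mQ kI mI hsize hns
  have hk : kI ≤ kQ + 1 := by
    have h2 : (2:ℝ) * (2:ℝ)^kQ = (2:ℝ)^(kQ+1) := by
      rw [zpow_add_one₀ (two_ne_zero)]; ring
    rw [h2] at hsize
    exact (zpow_le_zpow_iff_right₀ (by norm_num : (1:ℝ) < 2)).mp hsize
  have hdisj := dy_dyUp_disjoint hk hns
  have hQmem : (dy kQ mQ).indicator (1:ℝ→ℝ) ∈ simpleSpan :=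
    Submodule.subset_span ⟨kQ, mQ, rfl⟩
  constructor
  · have hh := haarW_mem_simpleSpan ω kI mI
    rw [ip, P.adj _ hQmem _ hh]
    apply integral_eq_zero_of_ae
    filter_upwards [(hP kI mI).2] with x hx
    by_cases hxQ : x ∈ dy kQ mQ
    · simp [hx (hdisj x hxQ)]
    · simp [Set.indicator_of_notMem hxQ]
  · have hh := haarW_mem_simpleSpan σ kI mI
    have hadj := P.adj _ hh _ hQmem
    rw [ip]
    have hcomm : ∫ x, P.Ts ((dy kQ mQ).indicator 1) x * haarW σ kI mI x ∂σ
        = ∫ x, haarW σ kI mI x * P.Ts ((dy kQ mQ).indicator 1) x ∂σ :=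
      integral_congr_ae (Eventually.of_forall fun x => mul_comm _ _)
    rw [hcomm, ← hadj]
    apply integral_eq_zero_of_ae
    filter_upwards [(hP kI mI).1] with x hx
    by_cases hxQ : x ∈ dy kQ mQ
    · simp [hx (hdisj x hxQ)]
    · simp [Set.indicator_of_notMem hxQ]


end
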